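/- Let Z be a finite set of contexts with elements partitioned among rounds, let K ≥ 2, and let g_1, …, g_T : {1,…,K} → [0,1] and contexts z_1, …, z_T ∈ Z be arbitrary sequences. Suppose at each round t the distribution p_t is computed by a per-context Multiplicative Weights rule: p_t[a] ∝ exp(η_t · Σ_{τ=1}^{t−1} g_τ(a)·1{z_τ = z_t}) with learning rate η_t = 2·√(log K / n_t(z_t)), where n_t(z) = |{τ ≤ t : z_τ = z}| (in particular p_t is uniform the first time a context appears). Then for every policy π : Z → {1,…,K}: Σ_{t=1}^T g_t(π(z_t)) − Σ_{t=1}^T Σ_{a=1}^K p_t[a]·g_t(a) ≤ √(T · |Z| · log K). -/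

import Mathlib

open Finset

private lemma hoeff_scalar {μ : ℝ} (h0 : 0 ≤ μ) (h1 : μ ≤ 1) {x : ℝ} (hx : 0 ≤ x) :
    Real.log (1 - μ + μ * Real.exp x) ≤ μ * x + x ^ 2 / 8 := by
  set D : ℝ → ℝ := fun y => 1 - μ + μ * Real.exp y with hDdef
  have hD1 : ∀ y : ℝ, 0 ≤ y → (1 : ℝ) ≤ D y := by
    intro y hy
    have := Real.one_le_exp hy
    simp only [hDdef]
    nlinarith
  have hDpos : ∀ y : ℝ, 0 ≤ y → (0 : ℝ) < D y := fun y hy => lt_of_lt_of_le one_pos (hD1 y hy)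
  have hDD : ∀ y : ℝ, HasDerivAt D (μ * Real.exp y) y := by
    intro y
    exact ((Real.hasDerivAt_exp y).const_mul μ).const_add (1 - μ)
  set F : ℝ → ℝ := fun y => μ * y + y ^ 2 / 8 - Real.log (D y) with hFdef
  set G : ℝ → ℝ := fun y => μ + y / 4 - μ * Real.exp y / D y with hGdef
  have hFD : ∀ y ∈ Set.Ioi (0:ℝ), HasDerivAt F (G y) y := by
    intro y hy
    have hDy : D y ≠ 0 := ne_of_gt (hDpos y (le_of_lt hy))
    have h1' : HasDerivAt (fun t => μ * t + t ^ 2 / 8) (μ + y * 2 / 8) y := by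
      have := ((hasDerivAt_id y).const_mul μ).add
        (((hasDerivAt_pow 2 y)).div_const 8)
      exact this.congr_deriv (by simp [mul_comm])
    have h2' : HasDerivAt (fun t => Real.log (D t)) (μ * Real.exp y / D y) y :=
      (hDD y).log hDy
    have := h1'.sub h2'
    refine this.congr_deriv ?_
    simp only [hGdef]; ring
  have hGD : ∀ y ∈ Set.Ioi (0:ℝ), HasDerivAt G
      (1/4 - (μ * Real.exp y * D y - μ * Real.exp y * (μ * Real.exp y)) / (D y) ^ 2) y := by
    intro y hy
    have hDy : D y ≠ 0 := ne_of_gt (hDpos y (le_of_lt hy))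
    have hq : HasDerivAt (fun t => μ * Real.exp t / D t)
        ((μ * Real.exp y * D y - μ * Real.exp y * (μ * Real.exp y)) / (D y) ^ 2) y :=
      ((Real.hasDerivAt_exp y).const_mul μ).div (hDD y) hDy
    have h1' : HasDerivAt (fun t => μ + t / 4) (1/4) y := by
      simpa using ((hasDerivAt_id y).div_const 4).const_add μ
    exact h1'.sub hq
  have hGnonneg : ∀ y ∈ Set.Ioi (0:ℝ),
      0 ≤ 1/4 - (μ * Real.exp y * D y - μ * Real.exp y * (μ * Real.exp y)) / (D y) ^ 2 := by
    intro y hy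
    have hDy : 0 < D y := hDpos y (le_of_lt hy)
    have he : 0 < Real.exp y := Real.exp_pos y
    rw [sub_nonneg, div_le_iff₀ (by positivity)]
    have hd : D y = 1 - μ + μ * Real.exp y := rfl
    rw [hd]
    nlinarith [sq_nonneg ((1 - μ) - μ * Real.exp y)]
  -- G is monotone on Ici 0, G 0 = 0
  have hGcont : ContinuousOn G (Set.Ici 0) := by
    apply ContinuousOn.sub (by fun_prop)
    apply ContinuousOn.div (by fun_prop) (by fun_prop)
    intro y hy; exact ne_of_gt (hDpos y hy)
  have hGmono : MonotoneOn G (Set.Ici (0:ℝ)) := by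
    apply monotoneOn_of_deriv_nonneg (convex_Ici 0) hGcont
    · intro y hy
      rw [interior_Ici] at hy
      exact ((hGD y hy).differentiableAt).differentiableWithinAt
    · intro y hy
      rw [interior_Ici] at hy
      rw [(hGD y hy).deriv]
      exact hGnonneg y hy
  have hG0 : G 0 = 0 := by
    simp only [hGdef, hDdef]
    simp
  have hGpos : ∀ y ∈ Set.Ici (0:ℝ), 0 ≤ G y := by
    intro y hy
    rw [← hG0]
    exact hGmono (Set.self_mem_Ici) hy hy
  have hFcont : ContinuousOn F (Set.Ici 0) := by
    apply ContinuousOn.sub (by fun_prop)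
    apply ContinuousOn.log (by fun_prop)
    intro y hy; exact ne_of_gt (hDpos y hy)
  have hFmono : MonotoneOn F (Set.Ici (0:ℝ)) := by
    apply monotoneOn_of_deriv_nonneg (convex_Ici 0) hFcont
    · intro y hy
      rw [interior_Ici] at hy
      exact ((hFD y hy).differentiableAt).differentiableWithinAt
    · intro y hy
      rw [interior_Ici] at hy
      rw [(hFD y hy).deriv]
      exact hGpos y (Set.mem_Ici.mpr (le_of_lt (Set.mem_Ioi.mp hy)))
  have hF0 : F 0 = 0 := by simp only [hFdef, hDdef]; simp
  have := hFmono Set.self_mem_Ici (show x ∈ Set.Ici (0:ℝ) from hx) hx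
  rw [hF0] at this
  simp only [hFdef] at this
  linarith

private lemma sum_inv_sqrt (m : ℕ) :
    ∑ k ∈ Finset.range m, (1 : ℝ) / Real.sqrt (k + 1) ≤ 2 * Real.sqrt m := by
  induction m with
  | zero => simp
  | succ m ih =>
    rw [Finset.sum_range_succ]
    have hb : (0:ℝ) < Real.sqrt (m + 1) := by positivity
    have hab : Real.sqrt (m:ℝ) ≤ Real.sqrt ((m:ℝ) + 1) := by
      apply Real.sqrt_le_sqrt; linarith
    have ha2 : Real.sqrt (m:ℝ) ^ 2 = (m:ℝ) := Real.sq_sqrt (by positivity)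
    have hb2 : Real.sqrt ((m:ℝ) + 1) ^ 2 = (m:ℝ) + 1 := Real.sq_sqrt (by positivity)
    have key : 1 / Real.sqrt ((m:ℝ) + 1) ≤ 2 * Real.sqrt ((m:ℝ)+1) - 2 * Real.sqrt (m:ℝ) := by
      rw [div_le_iff₀ hb]
      nlinarith [sq_nonneg (Real.sqrt (m:ℝ) - Real.sqrt ((m:ℝ)+1))]
    push_cast
    push_cast at ih
    linarith

/-- Core anytime multiplicative-weights regret bound. -/
private lemma mw_core (K : ℕ) (hK : 2 ≤ K) (m : ℕ) (q : ℕ → Fin K → ℝ)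
    (hq : ∀ k < m, ∀ a, q k a ∈ Set.Icc (0:ℝ) 1) (a0 : Fin K) :
    ∑ k ∈ Finset.range m, q k a0
      - ∑ k ∈ Finset.range m, ∑ a : Fin K,
          (Real.exp (2 * Real.sqrt (Real.log K / (k+1))
              * ∑ j ∈ Finset.range k, q j a) /
            ∑ b : Fin K, Real.exp (2 * Real.sqrt (Real.log K / (k+1))
              * ∑ j ∈ Finset.range k, q j b)) * q k a
    ≤ Real.sqrt (m * Real.log K) := by
  have hKpos : (0:ℝ) < K := by positivity
  have hlogK : (0:ℝ) < Real.log K := by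
    apply Real.log_pos; exact_mod_cast by omega
  rcases Nat.eq_zero_or_pos m with hm | hm
  · subst hm; simp
  -- notation
  set G : ℕ → Fin K → ℝ := fun k a => ∑ j ∈ Finset.range k, q j a with hG
  set W : ℝ → ℕ → ℝ := fun η k => ∑ b : Fin K, Real.exp (η * G k b) with hW
  set Φ : ℝ → ℕ → ℝ := fun η k => Real.log (W η k / K) / η with hΦ
  have hWpos : ∀ η k, 0 < W η k := by
    intro η k
    have : Nonempty (Fin K) := ⟨⟨0, by omega⟩⟩
    apply Finset.sum_pos (fun b _ => Real.exp_pos _)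
    exact Finset.univ_nonempty
  have hΦ0 : ∀ η, Φ η 0 = 0 := by
    intro η
    have : W η 0 = K := by
      simp [hW, hG]
    simp [hΦ, this, div_self (ne_of_gt hKpos)]
  -- step inequality
  have hstep : ∀ η : ℝ, 0 < η → ∀ k, k < m →
      Φ η (k+1) ≤ Φ η k + (∑ a : Fin K, Real.exp (η * G k a) / W η k * q k a) + η / 8 := by
    intro η hη k hk
    set μ : ℝ := ∑ a : Fin K, Real.exp (η * G k a) / W η k * q k a with hμ
    have hpnn : ∀ a : Fin K, 0 ≤ Real.exp (η * G k a) / W η k := by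
      intro a; positivity
    have hpsum : ∑ a : Fin K, Real.exp (η * G k a) / W η k = 1 := by
      rw [← Finset.sum_div, div_self (ne_of_gt (hWpos η k))]
    have hμ0 : 0 ≤ μ := Finset.sum_nonneg fun a _ =>
      mul_nonneg (hpnn a) (hq k hk a).1
    have hμ1 : μ ≤ 1 := by
      rw [← hpsum]
      apply Finset.sum_le_sum
      intro a _
      exact mul_le_of_le_one_right (hpnn a) (hq k hk a).2
    -- W η (k+1) ≤ W η k * (1 - μ + μ * exp η)
    have hWstep : W η (k+1) ≤ W η k * (1 - μ + μ * Real.exp η) := by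
      have expand : W η (k+1) = ∑ b : Fin K, Real.exp (η * G k b) * Real.exp (η * q k b) := by
        apply Finset.sum_congr rfl
        intro b _
        rw [← Real.exp_add]
        congr 1
        simp only [hG, Finset.sum_range_succ]
        ring
      rw [expand]
      have hbound : ∀ b : Fin K, Real.exp (η * q k b) ≤ 1 - q k b + q k b * Real.exp η := by
        intro b
        have hq0 := (hq k hk b).1
        have hq1 := (hq k hk b).2
        have := convexOn_exp.2 (Set.mem_univ (0:ℝ)) (Set.mem_univ η)
          (by linarith : (0:ℝ) ≤ 1 - q k b) hq0 (by ring)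
        simpa [smul_eq_mul, mul_comm] using this
      calc ∑ b : Fin K, Real.exp (η * G k b) * Real.exp (η * q k b)
          ≤ ∑ b : Fin K, Real.exp (η * G k b) * (1 - q k b + q k b * Real.exp η) :=
            Finset.sum_le_sum fun b _ =>
              mul_le_mul_of_nonneg_left (hbound b) (Real.exp_nonneg _)
        _ = W η k * (1 - μ + μ * Real.exp η) := by
            have : ∀ b : Fin K, Real.exp (η * G k b) * (1 - q k b + q k b * Real.exp η)
                = Real.exp (η * G k b) - Real.exp (η * G k b) * q k b
                  + Real.exp (η * G k b) * q k b * Real.exp η := by intro b; ring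
            simp only [this, Finset.sum_add_distrib, Finset.sum_sub_distrib, ← Finset.sum_mul]
            have hW0 : W η k ≠ 0 := ne_of_gt (hWpos η k)
            have hμW : ∑ b : Fin K, Real.exp (η * G k b) * q k b = W η k * μ := by
              rw [hμ, Finset.mul_sum]
              apply Finset.sum_congr rfl
              intro b _
              field_simp
            rw [hμW]
            ring
    have hlog : Real.log (W η (k+1)) ≤ Real.log (W η k) + (μ * η + η^2/8) := by
      have h1 : Real.log (W η (k+1)) ≤ Real.log (W η k * (1 - μ + μ * Real.exp η)) :=
        Real.log_le_log (hWpos η (k+1)) hWstep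
      have hpos : 0 < 1 - μ + μ * Real.exp η := by
        rcases eq_or_lt_of_le hμ0 with h|h
        · rw [← h]; norm_num
        · have : 0 < μ * Real.exp η := mul_pos h (Real.exp_pos η)
          linarith
      have h2 : Real.log (W η k * (1 - μ + μ * Real.exp η))
          = Real.log (W η k) + Real.log (1 - μ + μ * Real.exp η) :=
        Real.log_mul (ne_of_gt (hWpos η k)) (ne_of_gt hpos)
      rw [h2] at h1
      have h3 := hoeff_scalar hμ0 hμ1 (le_of_lt hη)
      linarith
    -- divide by η
    simp only [hΦ]
    rw [Real.log_div (ne_of_gt (hWpos η (k+1))) (ne_of_gt hKpos),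
        Real.log_div (ne_of_gt (hWpos η k)) (ne_of_gt hKpos)]
    rw [div_le_iff₀ hη]
    have heq : ((Real.log (W η k) - Real.log K) / η + μ + η / 8) * η
        = (Real.log (W η k) - Real.log K) + (μ * η + η ^ 2 / 8) := by
      field_simp
      ring
    rw [heq]
    linarith
  -- monotonicity of Φ in η
  have hmono : ∀ η' ηb : ℝ, 0 < η' → η' ≤ ηb → ∀ k, Φ η' k ≤ Φ ηb k := by
    intro η' ηb hη' hle k
    have hηb : 0 < ηb := lt_of_lt_of_le hη' hle
    have hp1 : (1:ℝ) ≤ ηb / η' := (one_le_div hη').mpr hle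
    have key := Real.arith_mean_le_rpow_mean (Finset.univ : Finset (Fin K))
      (fun _ => 1 / (K:ℝ)) (fun b => Real.exp (η' * G k b))
      (fun i _ => by positivity)
      (by simp [Finset.card_univ]; field_simp)
      (fun i _ => (Real.exp_pos _).le) hp1
    have hz : ∀ b : Fin K, Real.exp (η' * G k b) ^ (ηb / η') = Real.exp (ηb * G k b) := by
      intro b
      rw [← Real.exp_mul]
      congr 1
      field_simp
    simp only [hz] at key
    have hLHS : ∑ b : Fin K, 1 / (K:ℝ) * Real.exp (η' * G k b) = W η' k / K := by
      simp only [hW, Finset.sum_div, one_div_mul_eq_div]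
    have hRHS : ∑ b : Fin K, 1 / (K:ℝ) * Real.exp (ηb * G k b) = W ηb k / K := by
      simp only [hW, Finset.sum_div, one_div_mul_eq_div]
    rw [hLHS, hRHS, one_div_div] at key
    have hWK' : 0 < W η' k / K := div_pos (hWpos _ _) hKpos
    have hWKb : 0 < W ηb k / K := div_pos (hWpos _ _) hKpos
    have hlog2 : Real.log (W η' k / K) ≤ (η' / ηb) * Real.log (W ηb k / K) := by
      calc Real.log (W η' k / K) ≤ Real.log ((W ηb k / K) ^ (η' / ηb)) :=
            Real.log_le_log hWK' key
        _ = (η' / ηb) * Real.log (W ηb k / K) := Real.log_rpow hWKb _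
    have heq2 : (η' / ηb) * Real.log (W ηb k / K) / η' = Real.log (W ηb k / K) / ηb := by
      field_simp
    calc Φ η' k = Real.log (W η' k / K) / η' := rfl
      _ ≤ (η' / ηb) * Real.log (W ηb k / K) / η' := by gcongr
      _ = Real.log (W ηb k / K) / ηb := heq2
      _ = Φ ηb k := rfl
  -- learning rates
  set ηf : ℕ → ℝ := fun k => 2 * Real.sqrt (Real.log K / (k + 1)) with hηf
  have hηfpos : ∀ k, 0 < ηf k :=
    fun k => mul_pos two_pos (Real.sqrt_pos.mpr (div_pos hlogK (by positivity)))
  have hηfmono : ∀ k, ηf (k + 1) ≤ ηf k := by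
    intro k
    apply mul_le_mul_of_nonneg_left _ (by norm_num)
    apply Real.sqrt_le_sqrt
    apply div_le_div_of_nonneg_left hlogK.le (by positivity)
    push_cast
    linarith
  set dot : ℕ → ℝ := fun k => ∑ a : Fin K, Real.exp (ηf k * G k a) / W (ηf k) k * q k a
    with hdot
  -- telescoping
  have htel : ∀ u, 1 ≤ u → u ≤ m → Φ (ηf (u - 1)) u ≤ ∑ k ∈ Finset.range u, (dot k + ηf k / 8) := by
    intro u
    induction u with
    | zero => omega
    | succ v ih =>
      intro _ hum
      rcases Nat.eq_zero_or_pos v with hv | hv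
      · subst hv
        have hs := hstep (ηf 0) (hηfpos 0) 0 (by omega)
        rw [hΦ0] at hs
        simpa using hs
      · have ih' := ih (by omega) (by omega)
        have hs := hstep (ηf v) (hηfpos v) v (by omega)
        have hmn : Φ (ηf v) v ≤ Φ (ηf (v - 1)) v := by
          apply hmono _ _ (hηfpos v) _ v
          have hv1 : v - 1 + 1 = v := by omega
          calc ηf v = ηf (v - 1 + 1) := by rw [hv1]
            _ ≤ ηf (v - 1) := hηfmono _
        rw [Finset.sum_range_succ]
        have hv2 : v + 1 - 1 = v := by omega
        rw [hv2]
        linarith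
  -- final comparison with best action
  have hfinal : G m a0 ≤ Φ (ηf (m - 1)) m + Real.log K / ηf (m - 1) := by
    set η0 := ηf (m - 1)
    have hη0 : 0 < η0 := hηfpos _
    have hle : Real.exp (η0 * G m a0) ≤ W η0 m := by
      apply Finset.single_le_sum (fun b _ => (Real.exp_pos _).le) (Finset.mem_univ a0)
    have h2 : η0 * G m a0 ≤ Real.log (W η0 m) :=
      (Real.le_log_iff_exp_le (hWpos _ _)).mpr hle
    have h3 : Real.log (W η0 m / K) = Real.log (W η0 m) - Real.log K :=
      Real.log_div (ne_of_gt (hWpos _ _)) (ne_of_gt hKpos)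
    have : Φ η0 m + Real.log K / η0 = Real.log (W η0 m) / η0 := by
      simp only [hΦ, h3]
      field_simp
      ring
    rw [this, le_div_iff₀ hη0]
    calc G m a0 * η0 = η0 * G m a0 := by ring
      _ ≤ _ := h2
  -- arithmetic: the two halves
  have hmR : (0:ℝ) < m := by exact_mod_cast hm
  have hcast : ((m - 1 : ℕ) : ℝ) + 1 = m := by
    have : m - 1 + 1 = m := by omega
    exact_mod_cast congrArg (Nat.cast : ℕ → ℝ) this
  have hsqK : 0 < Real.sqrt (Real.log K) := Real.sqrt_pos.mpr hlogK
  have hsqm : 0 < Real.sqrt m := Real.sqrt_pos.mpr hmR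
  have hmul : Real.sqrt (m * Real.log K) = Real.sqrt m * Real.sqrt (Real.log K) :=
    Real.sqrt_mul (by positivity) _
  have hA : Real.log K / ηf (m - 1) = Real.sqrt (m * Real.log K) / 2 := by
    have : ηf (m - 1) = 2 * (Real.sqrt (Real.log K) / Real.sqrt m) := by
      simp only [hηf]
      rw [hcast, Real.sqrt_div hlogK.le]
    rw [this, hmul]
    have hss := Real.mul_self_sqrt hlogK.le
    field_simp
    nlinarith [hss, hsqm, hsqK]
  have hB : ∑ k ∈ Finset.range m, ηf k / 8 ≤ Real.sqrt (m * Real.log K) / 2 := by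
    have hterm : ∀ k : ℕ, ηf k / 8
        = Real.sqrt (Real.log K) / 4 * (1 / Real.sqrt ((k:ℝ) + 1)) := by
      intro k
      simp only [hηf]
      rw [Real.sqrt_div hlogK.le]
      ring
    calc ∑ k ∈ Finset.range m, ηf k / 8
        = Real.sqrt (Real.log K) / 4 * ∑ k ∈ Finset.range m, (1 / Real.sqrt ((k:ℝ) + 1)) := by
          rw [Finset.mul_sum]
          exact Finset.sum_congr rfl fun k _ => hterm k
      _ ≤ Real.sqrt (Real.log K) / 4 * (2 * Real.sqrt m) := by
          apply mul_le_mul_of_nonneg_left (sum_inv_sqrt m) (by positivity)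
      _ = Real.sqrt (m * Real.log K) / 2 := by rw [hmul]; ring
  -- put everything together
  have htel' := htel m hm le_rfl
  have hsum_split : ∑ k ∈ Finset.range m, (dot k + ηf k / 8)
      = (∑ k ∈ Finset.range m, dot k) + ∑ k ∈ Finset.range m, ηf k / 8 :=
    Finset.sum_add_distrib
  have hdot_eq : ∑ k ∈ Finset.range m, ∑ a : Fin K,
          (Real.exp (2 * Real.sqrt (Real.log K / (k+1))
              * ∑ j ∈ Finset.range k, q j a) /
            ∑ b : Fin K, Real.exp (2 * Real.sqrt (Real.log K / (k+1))
              * ∑ j ∈ Finset.range k, q j b)) * q k a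
      = ∑ k ∈ Finset.range m, dot k := rfl
  have hG_eq : ∑ k ∈ Finset.range m, q k a0 = G m a0 := rfl
  rw [hdot_eq, hG_eq]
  linarith

private lemma per_context
    {Z : Type*} [DecidableEq Z]
    (K T : ℕ) (hK : 2 ≤ K)
    (g : ℕ → Fin K → ℝ)
    (hg : ∀ t < T, ∀ a : Fin K, g t a ∈ Set.Icc (0 : ℝ) 1)
    (z : ℕ → Z)
    (n : ℕ → ℕ)
    (hn : ∀ t < T, n t = ((Finset.range (t + 1)).filter (fun τ => z τ = z t)).card)
    (η : ℕ → ℝ)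
    (hη : ∀ t < T, η t = 2 * Real.sqrt (Real.log K / n t))
    (p : ℕ → Fin K → ℝ)
    (hp : ∀ t < T, ∀ a : Fin K,
      p t a = Real.exp (η t * ∑ τ ∈ (Finset.range t).filter (fun τ => z τ = z t), g τ a) /
        ∑ b : Fin K, Real.exp (η t * ∑ τ ∈ (Finset.range t).filter (fun τ => z τ = z t), g τ b))
    (ζ : Z) (a0 : Fin K) :
    ∑ t ∈ (Finset.range T).filter (fun t => z t = ζ),
        (g t a0 - ∑ a : Fin K, p t a * g t a)
      ≤ Real.sqrt ((((Finset.range T).filter (fun t => z t = ζ)).card : ℝ) * Real.log K) := by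
  classical
  set s := (Finset.range T).filter (fun t => z t = ζ) with hs
  set m := s.card with hm
  set e : Fin m ↪o ℕ := s.orderEmbOfFin rfl with he
  have hes : ∀ k : Fin m, e k ∈ s := fun k => Finset.orderEmbOfFin_mem s rfl k
  have hesurj : ∀ t ∈ s, ∃ k : Fin m, e k = t := by
    intro t ht
    have : t ∈ Set.range e := by
      rw [he, Finset.range_orderEmbOfFin]
      exact ht
    exact this
  have heT : ∀ k : Fin m, e k < T :=
    fun k => Finset.mem_range.mp (Finset.mem_filter.mp (hes k)).1
  have hez : ∀ k : Fin m, z (e k) = ζ := fun k => (Finset.mem_filter.mp (hes k)).2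
  set q : ℕ → Fin K → ℝ := fun k a => if h : k < m then g (e ⟨k, h⟩) a else 0 with hq
  have hq01 : ∀ k < m, ∀ a, q k a ∈ Set.Icc (0:ℝ) 1 := by
    intro k hk a
    simp only [hq, dif_pos hk]
    exact hg _ (heT ⟨k, hk⟩) a
  -- the filtered past of round `e k` is the `< e k` part of `s`
  have hset : ∀ k : Fin m, (Finset.range (e k)).filter (fun τ => z τ = ζ)
      = s.filter (fun τ => τ < e k) := by
    intro k
    ext τ
    simp only [hs, Finset.mem_filter, Finset.mem_range]
    constructor
    · rintro ⟨h1, h2⟩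
      exact ⟨⟨lt_trans h1 (heT k), h2⟩, h1⟩
    · rintro ⟨⟨_, h2⟩, h3⟩
      exact ⟨h3, h2⟩
  -- reindexing the prefix sums
  have hsum : ∀ (k : Fin m) (a : Fin K),
      ∑ j ∈ Finset.range (k : ℕ), q j a = ∑ τ ∈ s.filter (fun τ => τ < e k), g τ a := by
    intro k a
    apply Finset.sum_bij
      (i := fun (j : ℕ) (hj : j ∈ Finset.range (k : ℕ)) =>
        e ⟨j, lt_trans (Finset.mem_range.mp hj) k.isLt⟩)
    · intro j hj
      rw [Finset.mem_filter]
      refine ⟨hes _, ?_⟩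
      rw [OrderEmbedding.lt_iff_lt]
      exact Finset.mem_range.mp hj
    · intro j1 h1 j2 h2 hee
      have := e.injective hee
      simpa using this
    · intro τ hτ
      rw [Finset.mem_filter] at hτ
      obtain ⟨k', hk'⟩ := hesurj τ hτ.1
      have hlt : (k' : ℕ) < (k : ℕ) := by
        have : e k' < e k := by rw [hk']; exact hτ.2
        rwa [OrderEmbedding.lt_iff_lt] at this
      exact ⟨(k' : ℕ), Finset.mem_range.mpr hlt, by simp [hk']⟩
    · intro j hj
      simp only [hq]
      rw [dif_pos (lt_trans (Finset.mem_range.mp hj) k.isLt)]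
  -- cardinality of the prefix
  have hcard : ∀ k : Fin m, (s.filter (fun τ => τ < e k)).card = (k : ℕ) := by
    intro k
    rw [← Finset.card_range (k : ℕ)]
    symm
    apply Finset.card_bij
      (i := fun (j : ℕ) (hj : j ∈ Finset.range (k : ℕ)) =>
        e ⟨j, lt_trans (Finset.mem_range.mp hj) k.isLt⟩)
    · intro j hj
      rw [Finset.mem_filter]
      refine ⟨hes _, ?_⟩
      rw [OrderEmbedding.lt_iff_lt]
      exact Finset.mem_range.mp hj
    · intro j1 h1 j2 h2 hee
      have := e.injective hee
      simpa using this
    · intro τ hτ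
      rw [Finset.mem_filter] at hτ
      obtain ⟨k', hk'⟩ := hesurj τ hτ.1
      have hlt : (k' : ℕ) < (k : ℕ) := by
        have : e k' < e k := by rw [hk']; exact hτ.2
        rwa [OrderEmbedding.lt_iff_lt] at this
      exact ⟨(k' : ℕ), Finset.mem_range.mpr hlt, by simp [hk']⟩
  -- the count n at round e k
  have hnk : ∀ k : Fin m, n (e k) = (k : ℕ) + 1 := by
    intro k
    rw [hn _ (heT k), hez k]
    have hins : (Finset.range (e k + 1)).filter (fun τ => z τ = ζ)
        = insert (e k) (s.filter (fun τ => τ < e k)) := by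
      ext τ
      simp only [hs, Finset.mem_filter, Finset.mem_range, Finset.mem_insert]
      constructor
      · rintro ⟨h1, h2⟩
        rcases Nat.lt_succ_iff_lt_or_eq.mp h1 with h | h
        · exact Or.inr ⟨⟨lt_trans h (heT k), h2⟩, h⟩
        · exact Or.inl h
      · rintro (h | ⟨⟨_, h2⟩, h3⟩)
        · subst h; exact ⟨Nat.lt_succ_self _, hez k⟩
        · exact ⟨Nat.lt_succ_of_lt h3, h2⟩
    rw [hins, Finset.card_insert_of_notMem (by simp), hcard k]
  -- identify p at round e k with the MW weights of q
  have hpk : ∀ (k : Fin m) (a : Fin K),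
      p (e k) a = Real.exp (2 * Real.sqrt (Real.log K / ((k : ℕ) + 1))
              * ∑ j ∈ Finset.range (k : ℕ), q j a) /
            ∑ b : Fin K, Real.exp (2 * Real.sqrt (Real.log K / ((k : ℕ) + 1))
              * ∑ j ∈ Finset.range (k : ℕ), q j b) := by
    intro k a
    have hηe : η (e k) = 2 * Real.sqrt (Real.log K / ((k : ℕ) + 1)) := by
      rw [hη _ (heT k), hnk k]
      push_cast
      ring
    have hfs : (Finset.range (e k)).filter (fun τ => z τ = z (e k))
        = s.filter (fun τ => τ < e k) := by
      rw [hez k, hset k]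
    rw [hp _ (heT k), hηe, hfs]
    congr 1
    · rw [hsum k a]
    · refine Finset.sum_congr rfl fun b _ => ?_
      rw [hsum k b]
  -- reindex the whole regret sum
  have hmain := mw_core K hK m q hq01 a0
  have hreindex : ∑ t ∈ s, (g t a0 - ∑ a : Fin K, p t a * g t a)
      = ∑ k ∈ Finset.range m, (q k a0 - ∑ a : Fin K,
          (Real.exp (2 * Real.sqrt (Real.log K / (k+1))
              * ∑ j ∈ Finset.range k, q j a) /
            ∑ b : Fin K, Real.exp (2 * Real.sqrt (Real.log K / (k+1))
              * ∑ j ∈ Finset.range k, q j b)) * q k a) := by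
    symm
    apply Finset.sum_bij
      (i := fun (j : ℕ) (hj : j ∈ Finset.range m) => e ⟨j, Finset.mem_range.mp hj⟩)
    · intro j hj; exact hes _
    · intro j1 h1 j2 h2 hee
      have := e.injective hee
      simpa using this
    · intro τ hτ
      obtain ⟨k', hk'⟩ := hesurj τ hτ
      exact ⟨(k' : ℕ), Finset.mem_range.mpr k'.isLt, by simp [hk']⟩
    · intro j hj
      have hjm : j < m := Finset.mem_range.mp hj
      set k : Fin m := ⟨j, hjm⟩ with hk
      have hqj : ∀ a : Fin K, q j a = g (e k) a := by
        intro a; simp only [hq]; rw [dif_pos hjm]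
      congr 1
      · exact hqj a0
      · refine Finset.sum_congr rfl fun a _ => ?_
        rw [hqj a, hpk k a]
  rw [hreindex, Finset.sum_sub_distrib]
  exact hmain
/-- **Per-context Multiplicative Weights regret bound.**
Let `Z` be a finite set of contexts, `K ≥ 2` actions, rewards
`g 0, …, g (T-1) : Fin K → [0,1]` and contexts `z 0, …, z (T-1) ∈ Z`
(rounds indexed from `0`). At round `t`, the distribution `p t` is computed
by a per-context Multiplicative Weights rule over the past rounds sharing
the current context:
`p t a ∝ exp (η t * ∑_{τ < t, z τ = z t} g τ a)` with learning rate
`η t = 2 * √(log K / n t)` where `n t = |{τ ≤ t : z τ = z t}|`.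
Then for every policy `π : Z → Fin K`,
`∑_t g t (π (z t)) − ∑_t ∑_a p t a * g t a ≤ √(T * |Z| * log K)`. -/
theorem per_context_mw_regret_bound
    {Z : Type*} [Fintype Z] [DecidableEq Z]
    (K T : ℕ) (hK : 2 ≤ K)
    (g : ℕ → Fin K → ℝ)
    (hg : ∀ t < T, ∀ a : Fin K, g t a ∈ Set.Icc (0 : ℝ) 1)
    (z : ℕ → Z)
    (n : ℕ → ℕ)
    (hn : ∀ t < T, n t = ((Finset.range (t + 1)).filter (fun τ => z τ = z t)).card)
    (η : ℕ → ℝ)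
    (hη : ∀ t < T, η t = 2 * Real.sqrt (Real.log K / n t))
    (p : ℕ → Fin K → ℝ)
    (hp : ∀ t < T, ∀ a : Fin K,
      p t a = Real.exp (η t * ∑ τ ∈ (Finset.range t).filter (fun τ => z τ = z t), g τ a) /
        ∑ b : Fin K, Real.exp (η t * ∑ τ ∈ (Finset.range t).filter (fun τ => z τ = z t), g τ b))
    (π : Z → Fin K) :
    ∑ t ∈ Finset.range T, g t (π (z t))
      - ∑ t ∈ Finset.range T, ∑ a : Fin K, p t a * g t a
    ≤ Real.sqrt (T * (Fintype.card Z) * Real.log K) := by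
  classical
  have hlogK : (0:ℝ) ≤ Real.log K := Real.log_nonneg (by exact_mod_cast Nat.one_le_of_lt hK)
  set F : ℕ → ℝ := fun t => g t (π (z t)) - ∑ a : Fin K, p t a * g t a with hF
  have hLHS : ∑ t ∈ Finset.range T, g t (π (z t))
      - ∑ t ∈ Finset.range T, ∑ a : Fin K, p t a * g t a = ∑ t ∈ Finset.range T, F t :=
    (Finset.sum_sub_distrib _ _).symm
  rw [hLHS, ← Finset.sum_fiberwise (Finset.range T) z F]
  set c : Z → ℝ := fun ζ => (((Finset.range T).filter (fun t => z t = ζ)).card : ℝ) with hc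
  have hcnn : ∀ ζ, 0 ≤ c ζ := fun ζ => Nat.cast_nonneg _
  have hfiber : ∀ ζ : Z, ∑ t ∈ (Finset.range T).filter (fun t => z t = ζ), F t
      ≤ Real.sqrt (c ζ * Real.log K) := by
    intro ζ
    have hcongr : ∑ t ∈ (Finset.range T).filter (fun t => z t = ζ), F t
        = ∑ t ∈ (Finset.range T).filter (fun t => z t = ζ),
            (g t (π ζ) - ∑ a : Fin K, p t a * g t a) := by
      refine Finset.sum_congr rfl fun t ht => ?_
      have hzt := (Finset.mem_filter.mp ht).2
      simp only [hF, hzt]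
    rw [hcongr]
    exact per_context K T hK g hg z n hn η hη p hp ζ (π ζ)
  have hsumcard : ∑ ζ : Z, c ζ = T := by
    have hnat : ∑ ζ : Z, ((Finset.range T).filter (fun t => z t = ζ)).card
        = (Finset.range T).card := by
      simp_rw [Finset.card_eq_sum_ones]
      exact Finset.sum_fiberwise (Finset.range T) z (fun _ => 1)
    simp only [hc]
    rw [← Nat.cast_sum, hnat, Finset.card_range]
  calc ∑ ζ : Z, ∑ t ∈ (Finset.range T).filter (fun t => z t = ζ), F t
      ≤ ∑ ζ : Z, Real.sqrt (c ζ * Real.log K) := Finset.sum_le_sum fun ζ _ => hfiber ζ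
    _ = (∑ ζ : Z, Real.sqrt (c ζ)) * Real.sqrt (Real.log K) := by
        rw [Finset.sum_mul]
        exact Finset.sum_congr rfl fun ζ _ => Real.sqrt_mul (hcnn ζ) _
    _ ≤ Real.sqrt ((Fintype.card Z) * T) * Real.sqrt (Real.log K) := by
        apply mul_le_mul_of_nonneg_right _ (Real.sqrt_nonneg _)
        apply Real.le_sqrt_of_sq_le
        have h := sq_sum_le_card_mul_sum_sq (s := (Finset.univ : Finset Z))
          (f := fun ζ => Real.sqrt (c ζ))
        have h2 : ∀ ζ : Z, Real.sqrt (c ζ) ^ 2 = c ζ := fun ζ => Real.sq_sqrt (hcnn ζ)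
        simp_rw [h2, Finset.card_univ] at h
        calc (∑ ζ : Z, Real.sqrt (c ζ)) ^ 2 ≤ (Fintype.card Z : ℝ) * ∑ ζ : Z, c ζ := h
          _ = (Fintype.card Z : ℝ) * T := by rw [hsumcard]
    _ = Real.sqrt (T * (Fintype.card Z) * Real.log K) := by
        rw [← Real.sqrt_mul (by positivity)]
        ring_nf
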